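/- For all positive integers k and natural numbers n, the coefficient of x^n in C(x)^k, where C(x) is the generating function of the Catalan numbers, equals (k/(2n+k))·binom(2n+k, n), which also equals binom(2n+k-1, n) − binom(2n+k-1, n-1). -/

import Mathlib

open PowerSeries

private noncomputable def Cser : PowerSeries ℚ := PowerSeries.mk fun j => (catalan j : ℚ)

private def gfun (k n : ℕ) : ℚ :=
  ((2 * n + k - 1).choose n : ℚ) -
    (if n = 0 then 0 else ((2 * n + k - 1).choose (n - 1) : ℚ))

private lemma Cser_eq : Cser = 1 + X * Cser ^ 2 := by
  ext n
  cases n with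
  | zero => simp [Cser]
  | succ n =>
      rw [map_add, coeff_succ_X_mul]
      simp only [Cser, coeff_mk, coeff_one, Nat.succ_ne_zero, if_false, zero_add, sq,
        PowerSeries.coeff_mul, coeff_mk]
      rw [catalan_succ' n]
      push_cast
      rfl

private lemma gfun_zero_right (k : ℕ) : gfun k 0 = 1 := by simp [gfun]

private lemma gfun_zero_left (n : ℕ) (hn : n ≠ 0) : gfun 0 n = 0 := by
  obtain ⟨m, rfl⟩ := Nat.exists_eq_succ_of_ne_zero hn
  simp only [gfun, Nat.succ_ne_zero, if_false, Nat.succ_sub_one]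
  have h : 2 * (m + 1) + 0 - 1 = 2 * m + 1 := by omega
  rw [h]
  have hsym : (2 * m + 1).choose (m + 1) = (2 * m + 1).choose m := by
    rw [← Nat.choose_symm (show m ≤ 2 * m + 1 by omega)]
    congr 1
    omega
  rw [hsym, sub_self]

private lemma gfun_rec (k n : ℕ) :
    gfun (k + 1) (n + 1) = gfun k (n + 1) + gfun (k + 2) n := by
  cases n with
  | zero =>
      have h1 : 2 * (0 + 1) + (k + 1) - 1 = k + 1 + 1 := by omega
      have h2 : 2 * (0 + 1) + k - 1 = k + 1 := by omega
      simp only [gfun, h1, h2, if_pos rfl, Nat.succ_ne_zero, if_false, Nat.add_sub_cancel,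
        Nat.succ_sub_one]
      have p : (k + 1 + 1).choose (0 + 1) = (k + 1).choose 0 + (k + 1).choose (0 + 1) :=
        Nat.choose_succ_succ (k + 1) 0
      push_cast [p, Nat.choose_one_right, Nat.choose_zero_right]
      ring
  | succ m =>
      have e1 : 2 * (m + 1 + 1) + (k + 1) - 1 = 2 * m + k + 3 + 1 := by omega
      have e2 : 2 * (m + 1 + 1) + k - 1 = 2 * m + k + 3 := by omega
      have e3 : 2 * (m + 1) + (k + 2) - 1 = 2 * m + k + 3 := by omega
      simp only [gfun, Nat.succ_ne_zero, if_false, Nat.add_sub_cancel, e1, e2, e3]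
      have p1 : (2 * m + k + 3 + 1).choose (m + 1 + 1) =
          (2 * m + k + 3).choose (m + 1) + (2 * m + k + 3).choose (m + 1 + 1) :=
        Nat.choose_succ_succ _ (m + 1)
      have p2 : (2 * m + k + 3 + 1).choose (m + 1) =
          (2 * m + k + 3).choose m + (2 * m + k + 3).choose (m + 1) :=
        Nat.choose_succ_succ _ m
      push_cast [p1, p2]
      ring

private lemma main_lemma : ∀ n k, (PowerSeries.coeff (R := ℚ) n) (Cser ^ k) = gfun k n := by
  intro n
  induction n using Nat.strong_induction_on with
  | _ n ih =>
    cases n with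
    | zero =>
        intro k
        rw [gfun_zero_right, coeff_zero_eq_constantCoeff, map_pow]
        have : constantCoeff (R := ℚ) Cser = 1 := by
          rw [← coeff_zero_eq_constantCoeff]; simp [Cser]
        rw [this, one_pow]
    | succ n =>
        intro k
        induction k with
        | zero =>
            rw [pow_zero, gfun_zero_left _ (Nat.succ_ne_zero n)]
            simp
        | succ k ihk =>
            have : Cser ^ (k + 1) = Cser ^ k + X * Cser ^ (k + 2) := by
              calc Cser ^ (k + 1) = Cser ^ k * Cser := by ring
                _ = Cser ^ k * (1 + X * Cser ^ 2) := by rw [← Cser_eq]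
                _ = Cser ^ k + X * Cser ^ (k + 2) := by ring
            rw [this, map_add, coeff_succ_X_mul, ihk, ih n (Nat.lt_succ_self n) (k + 2),
              gfun_rec]

theorem stmt0 (k n : ℕ) (hk : 1 ≤ k) :
    (PowerSeries.coeff (R := ℚ) n) ((PowerSeries.mk fun j => (catalan j : ℚ)) ^ k) =
      (k : ℚ) / (2 * n + k) * ((2 * n + k).choose n) ∧
    (PowerSeries.coeff (R := ℚ) n) ((PowerSeries.mk fun j => (catalan j : ℚ)) ^ k) =
      ((2 * n + k - 1).choose n : ℚ) -
        (if n = 0 then 0 else ((2 * n + k - 1).choose (n - 1) : ℚ)) := by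
  have hmain : (PowerSeries.coeff (R := ℚ) n) ((PowerSeries.mk fun j => (catalan j : ℚ)) ^ k)
      = gfun k n := main_lemma n k
  refine ⟨?_, by rw [hmain]; rfl⟩
  rw [hmain]
  have hk0 : (k : ℚ) ≠ 0 := by positivity
  cases n with
  | zero =>
      rw [gfun_zero_right]
      simp [hk0]
  | succ m =>
      simp only [gfun, Nat.succ_ne_zero, if_false, Nat.add_sub_cancel]
      have e1 : 2 * (m + 1) + k - 1 = 2 * m + k + 1 := by omega
      have e2 : 2 * (m + 1) + k = 2 * m + k + 1 + 1 := by omega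
      rw [e1, e2]
      have p1 : (2 * m + k + 1 + 1).choose (m + 1) =
          (2 * m + k + 1).choose m + (2 * m + k + 1).choose (m + 1) :=
        Nat.choose_succ_succ _ m
      have p2 : (2 * m + k + 1 + 1) * (2 * m + k + 1).choose m =
          (2 * m + k + 1 + 1).choose (m + 1) * (m + 1) :=
        Nat.add_one_mul_choose_eq (2 * m + k + 1) m
      have hden : (2 * ((m + 1 : ℕ) : ℚ) + k) ≠ 0 := by positivity
      rw [div_mul_eq_mul_div, eq_div_iff hden]
      have p1' : ((2 * m + k + 1 + 1).choose (m + 1) : ℚ) =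
            (2 * m + k + 1).choose m + (2 * m + k + 1).choose (m + 1) := by exact_mod_cast p1
      have p2' : ((2 * (m:ℚ) + k + 1 + 1)) * (2 * m + k + 1).choose m =
          ((2 * m + k + 1 + 1).choose (m + 1) : ℚ) * (m + 1) := by exact_mod_cast p2
      push_cast
      linear_combination (-(2 * (m:ℚ) + k + 2)) * p1' - 2 * p2'
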